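/- If a homogeneous polynomial H_ℓ(u₁, v) of degree ℓ in variables (u₁, v) ∈ ℝ × ℝ^{n−1} satisfies ⟨∂_v H_ℓ(u), C v⟩ ≡ 0 where C is an (n−1)×(n−1) matrix whose eigenvalues (λ₂,...,λₙ) are non-resonant, then H_ℓ is independent of v, i.e. H_ℓ(u₁,v) = a·u₁^ℓ for some constant a. -/

import Mathlib

open MvPolynomial

set_option linter.unusedSectionVars false
set_option maxHeartbeats 1000000

section Aux
variable {ι : Type*} [Fintype ι] [DecidableEq ι]



lemma coeff_pderiv' (j : ι) (f : MvPolynomial ι ℂ) (m : ι →₀ ℕ) :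
    coeff m (pderiv j f) = ((m j : ℂ) + 1) * coeff (m + Finsupp.single j 1) f := by
  induction f using MvPolynomial.induction_on' with
  | add p q hp hq => simp [hp, hq, mul_add]
  | monomial s a =>
    rw [pderiv_monomial, coeff_monomial, coeff_monomial]
    by_cases hsj : s j = 0
    · have h1 : s - Finsupp.single j 1 = s := by
        ext l
        rcases eq_or_ne l j with rfl | hl
        · simp [Finsupp.tsub_apply, hsj]
        · simp [Finsupp.tsub_apply, Finsupp.single_apply, (Ne.symm hl)]
      have h2 : s ≠ m + Finsupp.single j 1 := by
        intro h
        have := congrArg (fun t => t j) h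
        simp [Finsupp.add_apply, Finsupp.single_apply] at this
        omega
      rw [h1, if_neg h2, mul_zero]
      by_cases h3 : s = m
      · subst h3; simp [hsj]
      · simp [h3]
    · have hiff : s - Finsupp.single j 1 = m ↔ s = m + Finsupp.single j 1 := by
        constructor
        · intro h
          ext l
          have h2 := congrArg (fun t => t l) h
          simp only [Finsupp.tsub_apply, Finsupp.add_apply, Finsupp.single_apply] at h2 ⊢
          rcases eq_or_ne j l with rfl | hl
          · simp only [if_pos rfl, eq_self_iff_true, if_true] at h2 ⊢
            omega
          · simp only [if_neg hl] at h2 ⊢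
            omega
        · intro h
          ext l
          have h2 := congrArg (fun t => t l) h
          simp only [Finsupp.tsub_apply, Finsupp.add_apply, Finsupp.single_apply] at h2 ⊢
          rcases eq_or_ne j l with rfl | hl
          · simp only [if_pos rfl, eq_self_iff_true, if_true] at h2 ⊢
            omega
          · simp only [if_neg hl] at h2 ⊢
            omega
      by_cases h : s = m + Finsupp.single j 1
      · rw [if_pos (hiff.mpr h), if_pos h]
        have : s j = m j + 1 := by
          have := congrArg (fun t => t j) h
          simpa [Finsupp.add_apply, Finsupp.single_apply] using this
        rw [this]
        push_cast
        ring
      · rw [if_neg (fun hc => h (hiff.mp hc)), if_neg h, mul_zero]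

noncomputable def subM (A : Matrix ι ι ℂ) :
    MvPolynomial ι ℂ →ₐ[ℂ] MvPolynomial ι ℂ := aeval (fun i => ∑ k, A i k • X k)

lemma subM_X (A : Matrix ι ι ℂ) (i : ι) : subM A (X i) = ∑ k, A i k • X k := by
  simp [subM]

lemma subM_lin (A : Matrix ι ι ℂ) (c : ι → ℂ) :
    subM A (∑ i, c i • X i) = ∑ l, (∑ i, c i * A i l) • X l := by
  rw [map_sum]
  have h1 : ∀ i, subM A (c i • X i) = ∑ l, (c i * A i l) • X l := by
    intro i
    rw [map_smul, subM_X, Finset.smul_sum]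
    exact Finset.sum_congr rfl fun l _ => (smul_smul _ _ _)
  rw [Finset.sum_congr rfl fun i _ => h1 i, Finset.sum_comm]
  exact Finset.sum_congr rfl fun l _ => (Finset.sum_smul).symm

lemma subM_comp (A B : Matrix ι ι ℂ) (F : MvPolynomial ι ℂ) :
    subM A (subM B F) = subM (B * A) F := by
  have h : (subM A).comp (subM B) = subM (B * A) := by
    apply MvPolynomial.algHom_ext
    intro i
    simp only [AlgHom.comp_apply, subM_X, subM_lin]
    exact Finset.sum_congr rfl fun l _ => by rw [Matrix.mul_apply]
  exact DFunLike.congr_fun h F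

lemma subM_one (F : MvPolynomial ι ℂ) : subM (1 : Matrix ι ι ℂ) F = F := by
  have h : subM (1 : Matrix ι ι ℂ) = AlgHom.id ℂ _ := by
    apply MvPolynomial.algHom_ext
    intro i
    simp [subM_X, Matrix.one_apply, ite_smul]
  rw [h]; rfl

lemma pderiv_subM (A : Matrix ι ι ℂ) (j : ι) (F : MvPolynomial ι ℂ) :
    pderiv j (subM A F) = ∑ i, A i j • subM A (pderiv i F) := by
  induction F using MvPolynomial.induction_on with
  | C a => simp [subM]
  | add p q hp hq =>
    simp only [map_add, hp, hq, ← Finset.sum_add_distrib, smul_add]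
  | mul_X p i' hp =>
    rw [map_mul, pderiv_mul, hp]
    have hdX : pderiv j (subM A (X i')) = C (A i' j) := by
      rw [subM_X, map_sum]
      have : ∀ k, pderiv j (A i' k • X k)
          = A i' k • (if k = j then (1 : MvPolynomial ι ℂ) else 0) := by
        intro k
        rw [Derivation.map_smul, pderiv_X]
        congr 1
        simp [Pi.single_apply]
      rw [Finset.sum_congr rfl fun k _ => this k]
      simp [smul_ite, Finset.sum_ite_eq', MvPolynomial.smul_eq_C_mul]
    rw [hdX]
    have hR : ∀ i, A i j • subM A (pderiv i (p * X i'))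
        = A i j • (subM A (pderiv i p) * subM A (X i')) + (if i = i' then A i j • subM A p else 0) := by
      intro i
      rw [pderiv_mul, pderiv_X, map_add, map_mul]
      rcases eq_or_ne i i' with rfl | hne
      · simp [smul_add]
      · simp [Pi.single_apply, hne]
    rw [Finset.sum_congr rfl fun i _ => hR i, Finset.sum_add_distrib]
    congr 1
    · rw [Finset.sum_mul]
      exact Finset.sum_congr rfl fun i _ => smul_mul_assoc _ _ _
    · rw [Finset.sum_ite_eq' Finset.univ i' (fun i => A i j • subM A p)]
      simp [MvPolynomial.smul_eq_C_mul, mul_comm]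

lemma DD_subM (A M N : Matrix ι ι ℂ) (h : A * M = N * A) (F : MvPolynomial ι ℂ) :
    ∑ j, (∑ i, M j i • X i) * pderiv j (subM A F)
      = subM A (∑ j, (∑ i, N j i • X i) * pderiv j F) := by
  rw [map_sum]
  have hR : ∀ k, subM A ((∑ i, N k i • X i) * pderiv k F)
      = ∑ l, ((N * A) k l • X l) * subM A (pderiv k F) := by
    intro k
    rw [map_mul, subM_lin, Finset.sum_mul]
    refine Finset.sum_congr rfl fun l _ => ?_
    rw [Matrix.mul_apply]
  rw [Finset.sum_congr rfl fun k _ => hR k]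
  have hL : ∀ j, (∑ i, M j i • X i) * pderiv j (subM A F)
      = ∑ k, A k j • ((∑ i, M j i • X i) * subM A (pderiv k F)) := by
    intro j
    rw [pderiv_subM, Finset.mul_sum]
    exact Finset.sum_congr rfl fun k _ => (mul_smul_comm _ _ _)
  rw [Finset.sum_congr rfl fun j _ => hL j, Finset.sum_comm]
  refine Finset.sum_congr rfl fun k _ => ?_
  rw [← h]
  have h1 : ∀ j, A k j • ((∑ i, M j i • X i) * subM A (pderiv k F))
      = (∑ i, (A k j * M j i) • X i) * subM A (pderiv k F) := by
    intro j
    rw [← smul_mul_assoc, Finset.smul_sum]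
    congr 1
    exact Finset.sum_congr rfl fun i _ => (smul_smul _ _ _)
  rw [Finset.sum_congr rfl fun j _ => h1 j, ← Finset.sum_mul, ← Finset.sum_mul]
  congr 1
  rw [show (∑ j, ∑ i, (A k j * M j i) • (X i : MvPolynomial ι ℂ))
      = ∑ i, ∑ j, (A k j * M j i) • (X i : MvPolynomial ι ℂ) from Finset.sum_comm]
  apply Finset.sum_congr rfl
  intro i _
  rw [Matrix.mul_apply, Finset.sum_smul]

end Aux

lemma key_kernel {nn : ℕ} (z : Fin nn) (T : Matrix (Fin nn) (Fin nn) ℂ)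
    (hrow : ∀ i, T z i = 0)
    (hraise : ∀ j i, T j i ≠ 0 → j ≠ i → (j : ℕ) < (i : ℕ))
    (hnr : ∀ m : Fin nn →₀ ℕ, (∃ j, j ≠ z ∧ m j ≠ 0) → (∑ j, (m j : ℂ) * T j j) ≠ 0)
    (G : MvPolynomial (Fin nn) ℂ)
    (hG : ∑ j, (∑ i, T j i • X i) * pderiv j G = 0) :
    ∀ m ∈ G.support, ∀ j, j ≠ z → m j = 0 := by
  classical
  set w : (Fin nn →₀ ℕ) → ℕ := fun m => ∑ j, m j * (j : ℕ) with hw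
  have hws : ∀ a : Fin nn, w (Finsupp.single a 1) = (a : ℕ) := by
    intro a
    simp only [hw, Finsupp.single_apply, ite_mul, one_mul, zero_mul]
    rw [Finset.sum_ite_eq]
    simp
  have hwadd : ∀ a b, w (a + b) = w a + w b := by
    intro a b
    simp [hw, Finsupp.add_apply, add_mul, Finset.sum_add_distrib]
  -- the coefficient formula
  have hcoeff : ∀ m : Fin nn →₀ ℕ,
      (∑ j, ∑ i, T j i * (if i ∈ m.support then
        ((((m - Finsupp.single i 1 : Fin nn →₀ ℕ)) j : ℂ) + 1) *
          coeff ((m - Finsupp.single i 1) + Finsupp.single j 1) G else 0)) = 0 := by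
    intro m
    have h0 : coeff m (∑ j, (∑ i, T j i • X i) * pderiv j G) = 0 := by rw [hG]; rfl
    rw [MvPolynomial.coeff_sum] at h0
    have h1 : ∀ j, coeff m ((∑ i, T j i • X i) * pderiv j G)
        = ∑ i, T j i * (if i ∈ m.support then
            ((((m - Finsupp.single i 1 : Fin nn →₀ ℕ)) j : ℂ) + 1) *
              coeff ((m - Finsupp.single i 1) + Finsupp.single j 1) G else 0) := by
      intro j
      rw [Finset.sum_mul]
      have h2 : ∀ i, (T j i • X i) * pderiv j G = T j i • (X i * pderiv j G) :=
        fun i => smul_mul_assoc _ _ _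
      rw [Finset.sum_congr rfl fun i _ => h2 i, MvPolynomial.coeff_sum]
      refine Finset.sum_congr rfl fun i _ => ?_
      rw [MvPolynomial.coeff_smul, smul_eq_mul]
      congr 1
      rw [MvPolynomial.coeff_X_mul']
      split_ifs with hmem
      · rw [coeff_pderiv']
      · rfl
    rw [Finset.sum_congr rfl fun j _ => h1 j] at h0
    exact h0
  suffices Hs : ∀ N : ℕ, ∀ m, w m ≤ N → m ∈ G.support → ∀ j, j ≠ z → m j = 0 by
    intro m hm
    exact Hs (w m) m le_rfl hm
  intro N
  induction N using Nat.strong_induction_on with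
  | _ N IH =>
  intro m hwm hm j hj
  by_contra hmj
  -- every term of the coefficient identity at m
  have hterm : ∀ j' i, T j' i * (if i ∈ m.support then
        ((((m - Finsupp.single i 1 : Fin nn →₀ ℕ)) j' : ℂ) + 1) *
          coeff ((m - Finsupp.single i 1) + Finsupp.single j' 1) G else 0)
      = (if i = j' then ((m j' : ℂ) * T j' j') * coeff m G else 0) := by
    intro j' i
    rcases eq_or_ne i j' with rfl | hij
    · rw [if_pos rfl]
      by_cases hmi : m i = 0
      · have : i ∉ m.support := by simp [Finsupp.mem_support_iff, hmi]
        rw [if_neg this, hmi]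
        simp
      · have hmem : i ∈ m.support := by simp [Finsupp.mem_support_iff, hmi]
        rw [if_pos hmem]
        have he1 : (m - Finsupp.single i 1) + Finsupp.single i 1 = m := by
          ext l
          simp only [Finsupp.add_apply, Finsupp.tsub_apply, Finsupp.single_apply]
          rcases eq_or_ne i l with rfl | hl
          · simp only [if_pos rfl, eq_self_iff_true, if_true]; omega
          · simp only [if_neg hl]; omega
        have he2 : (((m - Finsupp.single i 1 : Fin nn →₀ ℕ)) i : ℂ) + 1 = (m i : ℂ) := by
          have : (m - Finsupp.single i 1 : Fin nn →₀ ℕ) i = m i - 1 := by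
            simp [Finsupp.tsub_apply]
          rw [this]
          have h3 : (m i - 1) + 1 = m i := by omega
          rw [← h3]
          push_cast
          ring
        rw [he1, he2]
        ring
    · rw [if_neg hij]
      by_cases hT : T j' i = 0
      · rw [hT, zero_mul]
      · have hjz : j' ≠ z := by
          intro h; rw [h] at hT; exact hT (hrow i)
        have hlt : (j' : ℕ) < (i : ℕ) := hraise j' i hT (fun h => hij (h.symm))
        by_cases hmem : i ∈ m.support
        · rw [if_pos hmem]
          set m' := (m - Finsupp.single i 1) + Finsupp.single j' 1 with hm'
          have hmi : m i ≠ 0 := Finsupp.mem_support_iff.mp hmem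
          have hsplit : (m - Finsupp.single i 1) + Finsupp.single i 1 = m := by
            ext l
            simp only [Finsupp.add_apply, Finsupp.tsub_apply, Finsupp.single_apply]
            rcases eq_or_ne i l with rfl | hl
            · simp only [if_pos rfl, eq_self_iff_true, if_true]; omega
            · simp only [if_neg hl]; omega
          have hwm' : w m' < w m := by
            have e1 : w m = w (m - Finsupp.single i 1) + (i : ℕ) := by
              rw [← hsplit, hwadd, hws]
              rw [hsplit]
            have e2 : w m' = w (m - Finsupp.single i 1) + (j' : ℕ) := by
              rw [hm', hwadd, hws]
            omega
          have hm'j : m' j' ≠ 0 := by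
            rw [hm']
            simp [Finsupp.add_apply, Finsupp.single_apply]
          have hnotin : m' ∉ G.support := by
            intro hin
            exact hm'j (IH (w m') (lt_of_lt_of_le hwm' hwm) m' le_rfl hin j' hjz)
          have : coeff m' G = 0 := by
            simpa [Finsupp.mem_support_iff] using hnotin
          rw [this, mul_zero, mul_zero]
        · rw [if_neg hmem, mul_zero]
  have h0 := hcoeff m
  rw [Finset.sum_congr rfl fun j' _ =>
    Finset.sum_congr rfl fun i _ => hterm j' i] at h0
  have h1 : ∀ j', (∑ i, if i = j' then ((m j' : ℂ) * T j' j') * coeff m G else 0)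
      = ((m j' : ℂ) * T j' j') * coeff m G := by
    intro j'
    rw [Finset.sum_ite_eq' Finset.univ j' (fun _ => ((m j' : ℂ) * T j' j') * coeff m G)]
    simp
  rw [Finset.sum_congr rfl fun j' _ => h1 j', ← Finset.sum_mul] at h0
  have hcm : coeff m G ≠ 0 := Finsupp.mem_support_iff.mp hm
  have := hnr m ⟨j, hj, hmj⟩
  rcases mul_eq_zero.mp h0 with h | h
  · exact this h
  · exact hcm h



/-- Every square complex matrix is similar to an upper triangular matrix. -/
theorem exists_triangular : ∀ (k : ℕ) (A : Matrix (Fin k) (Fin k) ℂ),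
    ∃ P Pinv : Matrix (Fin k) (Fin k) ℂ, P * Pinv = 1 ∧ Pinv * P = 1 ∧
      (Pinv * A * P).BlockTriangular id := by
  intro k
  induction k with
  | zero =>
    intro A
    exact ⟨1, 1, by simp, by simp, fun i j h => i.elim0⟩
  | succ k IH =>
    intro A
    -- eigenvalue and eigenvector
    obtain ⟨μ, hμ⟩ := Module.End.exists_eigenvalue (Matrix.mulVecLin A)
    obtain ⟨v, hv⟩ := hμ.exists_hasEigenvector
    have hAv : A.mulVec v = μ • v := by
      have := hv.apply_eq_smul
      simpa [Matrix.mulVecLin_apply] using this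
    have hv0 : v ≠ 0 := hv.right
    obtain ⟨p, hp⟩ : ∃ p, v p ≠ 0 := by
      by_contra h
      push_neg at h
      exact hv0 (funext fun i => h i)
    set σ : Equiv.Perm (Fin (k+1)) := Equiv.swap 0 p with hσ
    set A₂ : Matrix (Fin (k+1)) (Fin (k+1)) ℂ := A.submatrix σ σ with hA₂
    set w : Fin (k+1) → ℂ := v ∘ σ with hwdef
    have hw0 : w 0 ≠ 0 := by
      simpa [hwdef, hσ, Equiv.swap_apply_left] using hp
    have hA₂w : A₂.mulVec w = μ • w := by
      funext i
      have h1 : A₂.mulVec w i = A.mulVec v (σ i) := by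
        simp only [Matrix.mulVec, dotProduct, hA₂, Matrix.submatrix_apply, hwdef,
          Function.comp]
        exact Fintype.sum_equiv σ _ _ (fun l => rfl)
      rw [h1, hAv]
      simp [hwdef]
    -- the change of basis sending e₀ to w
    set S : Matrix (Fin (k+1)) (Fin (k+1)) ℂ := (1 : Matrix _ _ ℂ).updateCol 0 w with hS
    have hdetS : S.det = w 0 := by
      have := Matrix.cramer_one (n := Fin (k+1)) (α := ℂ)
      have h2 : Matrix.cramer (1 : Matrix (Fin (k+1)) (Fin (k+1)) ℂ) w 0 = w 0 := by
        rw [this]; rfl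
      rw [← h2, Matrix.cramer_apply]
    have hdetU : IsUnit S.det := by rw [hdetS]; exact (hw0).isUnit
    have hS1 : S * S⁻¹ = 1 := Matrix.mul_nonsing_inv _ hdetU
    have hS2 : S⁻¹ * S = 1 := Matrix.nonsing_inv_mul _ hdetU
    have hScol : ∀ i, S i 0 = w i := fun i => by
      rw [hS, Matrix.updateCol_self]
    set T₁ : Matrix (Fin (k+1)) (Fin (k+1)) ℂ := S⁻¹ * A₂ * S with hT₁
    have hT₁col : ∀ i, T₁ i 0 = if i = 0 then μ else 0 := by
      intro i
      have hAS : ∀ j, (A₂ * S) j 0 = μ * w j := by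
        intro j
        rw [Matrix.mul_apply]
        have : ∀ l, A₂ j l * S l 0 = A₂ j l * w l := fun l => by rw [hScol]
        rw [Finset.sum_congr rfl fun l _ => this l]
        have := congrFun hA₂w j
        simpa [Matrix.mulVec, dotProduct, Pi.smul_apply, smul_eq_mul] using this
      have : T₁ i 0 = (S⁻¹ * (A₂ * S)) i 0 := by rw [hT₁, Matrix.mul_assoc]
      rw [this, Matrix.mul_apply]
      have : ∀ j, S⁻¹ i j * (A₂ * S) j 0 = μ * (S⁻¹ i j * S j 0) := by
        intro j; rw [hAS, hScol]; ring
      rw [Finset.sum_congr rfl fun j _ => this j, ← Finset.mul_sum]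
      have : ∑ j, S⁻¹ i j * S j 0 = (S⁻¹ * S) i 0 := (Matrix.mul_apply).symm
      rw [this, hS2]
      by_cases h : i = 0 <;> simp [h, Matrix.one_apply]
    -- recurse on the lower-right block
    set B : Matrix (Fin k) (Fin k) ℂ := T₁.submatrix Fin.succ Fin.succ with hB
    obtain ⟨R, Rinv, hR1, hR2, htriB⟩ := IH B
    -- assembling
    set ε : Fin 1 ⊕ Fin k ≃ Fin (k+1) := finSumFinEquiv.trans (finCongr (Nat.add_comm 1 k)) with hε
    have hε0 : ε (Sum.inl 0) = 0 := by
      apply Fin.ext; simp [hε]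
    have hεr : ∀ a : Fin k, ε (Sum.inr a) = a.succ := by
      intro a; apply Fin.ext; simp [hε, Nat.add_comm]
    set blk : Matrix (Fin k) (Fin k) ℂ → Matrix (Fin (k+1)) (Fin (k+1)) ℂ :=
      fun M => (Matrix.fromBlocks (1 : Matrix (Fin 1) (Fin 1) ℂ) 0 0 M).submatrix ε.symm ε.symm
      with hblk
    have hblkmul : ∀ M N, blk M * blk N = blk (M * N) := by
      intro M N
      rw [hblk]
      simp only []
      rw [Matrix.submatrix_mul_equiv, Matrix.fromBlocks_multiply]
      simp
    have hblk1 : blk 1 = 1 := by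
      rw [hblk]; simp only []
      rw [Matrix.fromBlocks_one, Matrix.submatrix_one_equiv]
    -- permutation matrices
    set Pr : Matrix (Fin (k+1)) (Fin (k+1)) ℂ := (1 : Matrix _ _ ℂ).submatrix id σ with hPr
    set Pl : Matrix (Fin (k+1)) (Fin (k+1)) ℂ := (1 : Matrix _ _ ℂ).submatrix σ id with hPl
    have hPrl : Pr * Pl = 1 := by
      rw [hPr, hPl]
      rw [Matrix.submatrix_mul_equiv (1 : Matrix _ _ ℂ) (1 : Matrix _ _ ℂ) id σ id]
      simp
    have hPlr : Pl * Pr = 1 := by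
      rw [hPl, hPr]
      have := Matrix.submatrix_mul_equiv (1 : Matrix (Fin (k+1)) (Fin (k+1)) ℂ)
        (1 : Matrix (Fin (k+1)) (Fin (k+1)) ℂ) σ (Equiv.refl _) σ
      simpa using this
    have hconj : Pl * A * Pr = A₂ := by
      have h1 : Pl * A = A.submatrix σ id := by
        rw [hPl]
        have := Matrix.submatrix_mul_equiv (1 : Matrix (Fin (k+1)) (Fin (k+1)) ℂ) A σ
          (Equiv.refl _) id
        simpa using this
      rw [h1, hPr]
      have := Matrix.submatrix_mul_equiv A (1 : Matrix (Fin (k+1)) (Fin (k+1)) ℂ) σ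
        (Equiv.refl _) σ
      simpa [hA₂] using this
    refine ⟨Pr * S * blk R, blk Rinv * S⁻¹ * Pl, ?_, ?_, ?_⟩
    · -- P * Pinv = 1
      calc Pr * S * blk R * (blk Rinv * S⁻¹ * Pl)
          = Pr * (S * ((blk R * blk Rinv) * S⁻¹)) * Pl := by
            simp only [Matrix.mul_assoc]
        _ = 1 := by rw [hblkmul, hR1, hblk1, one_mul, hS1, mul_one, hPrl]
    · -- Pinv * P = 1
      calc blk Rinv * S⁻¹ * Pl * (Pr * S * blk R)
          = blk Rinv * (S⁻¹ * ((Pl * Pr) * S)) * blk R := by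
            simp only [Matrix.mul_assoc]
        _ = 1 := by rw [hPlr, one_mul, hS2, mul_one, hblkmul, hR2, hblk1]
    · -- triangular
      have hT : blk Rinv * S⁻¹ * Pl * A * (Pr * S * blk R) = blk Rinv * T₁ * blk R := by
        calc blk Rinv * S⁻¹ * Pl * A * (Pr * S * blk R)
            = blk Rinv * (S⁻¹ * (Pl * A * Pr) * S) * blk R := by
              simp only [Matrix.mul_assoc]
          _ = blk Rinv * T₁ * blk R := by rw [hconj, hT₁]
      rw [hT]
      -- identify blocks of T₁
      set wtop : Matrix (Fin 1) (Fin k) ℂ := Matrix.of (fun _ b => T₁ 0 b.succ) with hwtop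
      set μm : Matrix (Fin 1) (Fin 1) ℂ := Matrix.of (fun _ _ => μ) with hμm
      have hsub : T₁.submatrix ε ε = Matrix.fromBlocks μm wtop 0 B := by
        ext i j
        cases i with
        | inl a =>
          cases j with
          | inl b =>
            have ha : a = 0 := Subsingleton.elim _ _
            have hb : b = 0 := Subsingleton.elim _ _
            subst ha; subst hb
            simp [Matrix.submatrix_apply, hε0, hT₁col, hμm]
          | inr b =>
            have ha : a = 0 := Subsingleton.elim _ _
            subst ha
            simp [Matrix.submatrix_apply, hε0, hεr, hwtop]
        | inr a =>
          cases j with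
          | inl b =>
            have hb : b = 0 := Subsingleton.elim _ _
            subst hb
            have : T₁ (ε (Sum.inr a)) (ε (Sum.inl 0)) = 0 := by
              rw [hε0, hT₁col]
              simp [hεr, Fin.succ_ne_zero]
            simpa [Matrix.submatrix_apply] using this
          | inr b =>
            simp [Matrix.submatrix_apply, hεr, hB]
      have hT₁eq : T₁ = (Matrix.fromBlocks μm wtop 0 B).submatrix ε.symm ε.symm := by
        rw [← hsub]
        ext i j
        simp [Matrix.submatrix_apply]
      rw [hT₁eq, hblk]
      simp only []
      rw [Matrix.submatrix_mul_equiv, Matrix.submatrix_mul_equiv, Matrix.fromBlocks_multiply,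
        Matrix.fromBlocks_multiply]
      intro i j hij
      simp only [Matrix.submatrix_apply]
      rcases ha : ε.symm i with a1 | a'
      · exfalso
        have hi : i = ε (Sum.inl a1) := by rw [← ha, Equiv.apply_symm_apply]
        have hi0 : i = 0 := by rw [hi, Subsingleton.elim a1 0, hε0]
        rw [hi0] at hij
        exact (Fin.not_lt_zero _) hij
      · rcases hb : ε.symm j with b1 | b'
        · simp [Matrix.fromBlocks]
        · have hi : i = ε (Sum.inr a') := by rw [← ha, Equiv.apply_symm_apply]
          have hj : j = ε (Sum.inr b') := by rw [← hb, Equiv.apply_symm_apply]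
          have hlt : b' < a' := by
            rw [hi, hj, hεr, hεr] at hij
            exact Fin.succ_lt_succ_iff.mp hij
          simpa using htriB (show id b' < id a' from hlt)


lemma charpoly_conj' {k : ℕ} (P Pinv A : Matrix (Fin k) (Fin k) ℂ)
    (h1 : P * Pinv = 1) (h2 : Pinv * P = 1) :
    (Pinv * A * P).charpoly = A.charpoly := by
  have hdef : ∀ M : Matrix (Fin k) (Fin k) ℂ,
      M.charmatrix = Matrix.scalar (Fin k) (Polynomial.X : Polynomial ℂ)
        - M.map Polynomial.C := fun M => rfl
  have hmapmul : ∀ (M N : Matrix (Fin k) (Fin k) ℂ),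
      (M * N).map (Polynomial.C : ℂ →+* Polynomial ℂ) = M.map Polynomial.C * N.map Polynomial.C :=
    fun M N => Matrix.map_mul
  have hmap1 : (Pinv.map (Polynomial.C : ℂ →+* Polynomial ℂ)) * (P.map Polynomial.C) = 1 := by
    rw [← hmapmul, h2]
    exact Matrix.map_one _ (map_zero _) (map_one _)
  have key : (Pinv * A * P).charmatrix
      = Pinv.map Polynomial.C * A.charmatrix * P.map Polynomial.C := by
    rw [hdef, hdef, Matrix.mul_sub, Matrix.sub_mul]
    congr 1
    · -- scalar X = Pinv' * scalar X * P'
      have hc : Matrix.scalar (Fin k) (Polynomial.X : Polynomial ℂ) * Pinv.map Polynomial.C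
          = Pinv.map Polynomial.C * Matrix.scalar (Fin k) (Polynomial.X : Polynomial ℂ) :=
        (Matrix.scalar_commute _ (fun r' => Commute.all _ _) _).eq
      rw [← hc, Matrix.mul_assoc, hmap1, Matrix.mul_one]
    · rw [hmapmul, hmapmul]
  rw [Matrix.charpoly, Matrix.charpoly, key, Matrix.det_mul, Matrix.det_mul]
  have hd : (Pinv.map (Polynomial.C : ℂ →+* Polynomial ℂ)).det * (P.map Polynomial.C).det = 1 := by
    rw [← Matrix.det_mul, hmap1, Matrix.det_one]
  calc (Pinv.map Polynomial.C).det * A.charmatrix.det * (P.map Polynomial.C).det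
      = A.charmatrix.det * ((Pinv.map Polynomial.C).det * (P.map Polynomial.C).det) := by ring
    _ = A.charmatrix.det := by rw [hd, mul_one]

/-- if a homogeneous polynomial H_ℓ(u₁,v) of degree ℓ satisfies
⟨∂_v H_ℓ, Cv⟩ ≡ 0, where the eigenvalues λ₂,…,λₙ of C are non-resonant, then
H_ℓ = a·u₁^ℓ.  Index 0 stands for u₁ and C is extended by a zero row and
column at index 0; ⟨∂_v H, Cv⟩ = Σ_{j≠0} (Σ_{i≠0} C j i · x_i) ∂H/∂x_j. -/
theorem stmt15 (n ℓ : ℕ) (hn : 1 ≤ n)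
    (C : Matrix (Fin n) (Fin n) ℝ)
    (hCrow : ∀ i, C ⟨0, hn⟩ i = 0) (hCcol : ∀ j, C j ⟨0, hn⟩ = 0)
    (lam : Fin n → ℂ)
    -- λ₂,…,λₙ are the (possibly complex) eigenvalues of C
    (hchar : C.charpoly.map (algebraMap ℝ ℂ) = Polynomial.X *
      ∏ j ∈ Finset.univ.erase ⟨0, hn⟩, (Polynomial.X - Polynomial.C (lam j)))
    -- non-resonance of (λ₂,…,λₙ)
    (hres : ∀ ms : Fin n → ℕ, ms ⟨0, hn⟩ = 0 → 1 ≤ ∑ i, ms i →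
      ∑ i, (ms i : ℂ) * lam i ≠ 0)
    (H : MvPolynomial (Fin n) ℝ) (hH : H.IsHomogeneous ℓ)
    (hker : ∑ j : Fin n, (∑ i : Fin n, C j i • X i) * pderiv j H = 0) :
    ∃ a : ℝ, H = a • (X ⟨0, hn⟩) ^ ℓ := by
  classical
  obtain ⟨m0, rfl⟩ : ∃ m0, n = 1 + m0 := ⟨n - 1, by omega⟩
  set z : Fin (1 + m0) := ⟨0, hn⟩ with hz
  set φR : ℝ →+* ℂ := algebraMap ℝ ℂ with hφR
  set Cc : Matrix (Fin (1 + m0)) (Fin (1 + m0)) ℂ := C.map φR with hCc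
  set Hc : MvPolynomial (Fin (1 + m0)) ℂ := MvPolynomial.map φR H with hHc
  -- transport the kernel identity to ℂ
  have hkerC : ∑ j, (∑ i, Cc j i • X i) * pderiv j Hc = 0 := by
    have h2 := congrArg (MvPolynomial.map φR) hker
    rw [map_zero, map_sum] at h2
    rw [← h2]
    refine (Finset.sum_congr rfl fun j _ => ?_).symm
    rw [map_mul]
    congr 1
    · rw [map_sum]
      refine Finset.sum_congr rfl fun i _ => ?_
      rw [smul_eq_C_mul, map_mul, MvPolynomial.map_C, MvPolynomial.map_X, ← smul_eq_C_mul]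
      rfl
    · rw [hHc]
      exact (pderiv_map).symm
  -- matrix setup
  set ε : Fin 1 ⊕ Fin m0 ≃ Fin (1 + m0) := finSumFinEquiv with hε
  have hεl : ε (Sum.inl 0) = z := by
    apply Fin.ext
    simp [hε, hz]
  have hεr_val : ∀ a : Fin m0, ((ε (Sum.inr a) : Fin (1 + m0)) : ℕ) = 1 + (a : ℕ) := by
    intro a
    simp [hε, Nat.add_comm]
  have hzval : (z : ℕ) = 0 := rfl
  have hεrz : ∀ a : Fin m0, ε (Sum.inr a) ≠ z := by
    intro a h
    have := congrArg Fin.val h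
    rw [hεr_val, hzval] at this
    omega
  set Ct : Matrix (Fin m0) (Fin m0) ℂ :=
    Matrix.of (fun k l => Cc (ε (Sum.inr k)) (ε (Sum.inr l))) with hCt
  obtain ⟨R, Rinv, hR1, hR2, htri⟩ := exists_triangular m0 Ct
  set P : Matrix (Fin (1 + m0)) (Fin (1 + m0)) ℂ :=
    (Matrix.fromBlocks 1 0 0 R).submatrix ε.symm ε.symm with hP
  set Pinv : Matrix (Fin (1 + m0)) (Fin (1 + m0)) ℂ :=
    (Matrix.fromBlocks 1 0 0 Rinv).submatrix ε.symm ε.symm with hPinv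
  have hPPinv : P * Pinv = 1 := by
    rw [hP, hPinv, Matrix.submatrix_mul_equiv, Matrix.fromBlocks_multiply]
    simp only [Matrix.mul_zero, Matrix.zero_mul, Matrix.mul_one, Matrix.one_mul,
      add_zero, zero_add, hR1]
    rw [Matrix.fromBlocks_one, Matrix.submatrix_one_equiv]
  have hPinvP : Pinv * P = 1 := by
    rw [hP, hPinv, Matrix.submatrix_mul_equiv, Matrix.fromBlocks_multiply]
    simp only [Matrix.mul_zero, Matrix.zero_mul, Matrix.mul_one, Matrix.one_mul,
      add_zero, zero_add, hR2]
    rw [Matrix.fromBlocks_one, Matrix.submatrix_one_equiv]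
  have hCcZrow : ∀ i, Cc z i = 0 := by
    intro i
    rw [hCc]
    show φR (C z i) = 0
    rw [show C z i = 0 from hCrow i, map_zero]
  have hCcZcol : ∀ j, Cc j z = 0 := by
    intro j
    rw [hCc]
    show φR (C j z) = 0
    rw [show C j z = 0 from hCcol j, map_zero]
  have hCsub : Cc = (Matrix.fromBlocks 0 0 0 Ct).submatrix ε.symm ε.symm := by
    ext i j
    rw [Matrix.submatrix_apply]
    rcases ha : ε.symm i with a | a <;> rcases hb : ε.symm j with b | b <;>
      have hi : i = ε (ε.symm i) := (ε.apply_symm_apply i).symm <;>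
      have hj : j = ε (ε.symm j) := (ε.apply_symm_apply j).symm <;>
      rw [ha] at hi <;> rw [hb] at hj
    · rw [hi, Subsingleton.elim a 0, hεl]
      simp [hCcZrow]
    · rw [hi, Subsingleton.elim a 0, hεl]
      simp [hCcZrow]
    · rw [hj, Subsingleton.elim b 0, hεl]
      simp [hCcZcol]
    · rw [hi, hj]
      simp [hCt]
  set D : Matrix (Fin m0) (Fin m0) ℂ := Rinv * Ct * R with hD
  set T : Matrix (Fin (1 + m0)) (Fin (1 + m0)) ℂ := Pinv * Cc * P with hT
  have hTsub : T = (Matrix.fromBlocks 0 0 0 D).submatrix ε.symm ε.symm := by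
    rw [hT, hCsub, hPinv, hP, Matrix.submatrix_mul_equiv, Matrix.submatrix_mul_equiv,
      Matrix.fromBlocks_multiply, Matrix.fromBlocks_multiply]
    simp only [Matrix.mul_zero, Matrix.zero_mul, Matrix.mul_one, Matrix.one_mul,
      add_zero, zero_add, hD, Matrix.mul_assoc]
  have hsz : ε.symm z = Sum.inl 0 := by rw [← hεl, Equiv.symm_apply_apply]
  have hTrow : ∀ i, T z i = 0 := by
    intro i
    rw [hTsub, Matrix.submatrix_apply, hsz]
    rcases ε.symm i with b | b <;> simp
  have hraise : ∀ j i, T j i ≠ 0 → j ≠ i → (j : ℕ) < (i : ℕ) := by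
    intro j i hTji hji
    rw [hTsub, Matrix.submatrix_apply] at hTji
    rcases ha : ε.symm j with a | a <;> rcases hb : ε.symm i with b | b <;>
      have hj2 : j = ε (ε.symm j) := (ε.apply_symm_apply j).symm <;>
      have hi2 : i = ε (ε.symm i) := (ε.apply_symm_apply i).symm <;>
      rw [ha] at hj2 <;> rw [hb] at hi2
    · exact absurd (by rw [hj2, hi2, Subsingleton.elim a b]) hji
    · have h1 : (j : ℕ) = 0 := by rw [hj2, Subsingleton.elim a 0, hεl, hzval]
      have h2 : (i : ℕ) = 1 + (b : ℕ) := by rw [hi2, hεr_val]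
      omega
    · exfalso
      apply hTji
      rw [ha, hb]
      simp
    · rw [ha, hb] at hTji
      have hab : a ≠ b := by
        intro h
        exact hji (by rw [hj2, hi2, h])
      have hnlt : ¬ (b < a) := by
        intro hlt
        apply hTji
        simpa using htri (show id b < id a from hlt)
      have h1 : (j : ℕ) = 1 + (a : ℕ) := by rw [hj2, hεr_val]
      have h2 : (i : ℕ) = 1 + (b : ℕ) := by rw [hi2, hεr_val]
      have : (a : ℕ) < (b : ℕ) := by
        have := Fin.lt_or_lt_of_ne hab
        rcases this with h | h
        · exact h
        · exact absurd h hnlt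
      omega
  have hTriT : T.BlockTriangular id := by
    intro i j hji
    by_contra hne
    have h1 : i ≠ j := by
      intro h
      rw [h] at hji
      exact lt_irrefl _ hji
    have h2 := hraise i j hne h1
    have h3 : (j : ℕ) < (i : ℕ) := hji
    omega
  -- characteristic polynomial bookkeeping
  have hcpT : ∏ i, (Polynomial.X - Polynomial.C (T i i)) = Polynomial.X *
      ∏ j ∈ Finset.univ.erase z, (Polynomial.X - Polynomial.C (lam j)) := by
    rw [← Matrix.charpoly_of_upperTriangular T hTriT, hT,
      charpoly_conj' P Pinv Cc hPPinv hPinvP, hCc, Matrix.charpoly_map, hchar]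
  have hdz : T z z = 0 := hTrow z
  have huniv : (Finset.univ : Finset (Fin (1 + m0))).val
      = z ::ₘ (Finset.univ.erase z).val := by
    rw [Finset.erase_val]
    exact (Multiset.cons_erase (Finset.mem_val.mpr (Finset.mem_univ z))).symm
  have hroots : ((Finset.univ : Finset (Fin (1 + m0))).val.map (fun i => T i i))
      = 0 ::ₘ (Finset.univ.erase z).val.map lam := by
    have h1 := congrArg Polynomial.roots hcpT
    have hL : (∏ i, (Polynomial.X - Polynomial.C (T i i))).roots
        = (Finset.univ : Finset (Fin (1 + m0))).val.map (fun i => T i i) := by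
      have hmm1 : (Finset.univ.val.map (fun i => Polynomial.X - Polynomial.C (T i i)))
          = ((Finset.univ.val.map (fun i => T i i)).map
            (fun a => Polynomial.X - Polynomial.C a)) := by
        rw [Multiset.map_map]
        rfl
      rw [Finset.prod_eq_multiset_prod, hmm1, Polynomial.roots_multiset_prod_X_sub_C]
    have hmon : (∏ j ∈ Finset.univ.erase z, (Polynomial.X - Polynomial.C (lam j))).Monic :=
      Polynomial.monic_prod_of_monic _ _ (fun j _ => Polynomial.monic_X_sub_C _)
    have hne : (Polynomial.X : Polynomial ℂ) *
        ∏ j ∈ Finset.univ.erase z, (Polynomial.X - Polynomial.C (lam j)) ≠ 0 :=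
      (Polynomial.monic_X.mul hmon).ne_zero
    have hR2' : (Polynomial.X * ∏ j ∈ Finset.univ.erase z,
        (Polynomial.X - Polynomial.C (lam j))).roots
        = 0 ::ₘ (Finset.univ.erase z).val.map lam := by
      have hmm2 : ((Finset.univ.erase z).val.map (fun j => Polynomial.X - Polynomial.C (lam j)))
          = (((Finset.univ.erase z).val.map lam).map
            (fun a => Polynomial.X - Polynomial.C a)) := by
        rw [Multiset.map_map]
        rfl
      rw [Polynomial.roots_mul hne, Polynomial.roots_X]
      rw [Finset.prod_eq_multiset_prod, hmm2, Polynomial.roots_multiset_prod_X_sub_C]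
      rw [Multiset.singleton_add]
    rw [hL, hR2'] at h1
    exact h1
  have hMd : (Finset.univ.erase z).val.map (fun i => T i i)
      = (Finset.univ.erase z).val.map lam := by
    have h2 : ((Finset.univ : Finset (Fin (1 + m0))).val.map (fun i => T i i))
        = 0 ::ₘ (Finset.univ.erase z).val.map (fun i => T i i) := by
      rw [huniv, Multiset.map_cons, hdz]
    rw [h2] at hroots
    exact (Multiset.cons_inj_right 0).mp hroots
  have hmemd : ∀ j, j ≠ z → ∃ k, k ≠ z ∧ lam k = T j j := by
    intro j hj
    have hjmem : j ∈ (Finset.univ.erase z).val :=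
      Finset.mem_val.mpr (Finset.mem_erase.mpr ⟨hj, Finset.mem_univ j⟩)
    have hmem : T j j ∈ (Finset.univ.erase z).val.map lam := by
      rw [← hMd]
      exact Multiset.mem_map_of_mem _ hjmem
    obtain ⟨k, hk, hkeq⟩ := Multiset.mem_map.mp hmem
    exact ⟨k, (Finset.mem_erase.mp (Finset.mem_val.mp hk)).1, hkeq⟩
  choose φf hφf1 hφf2 using hmemd
  set ψ : Fin (1 + m0) → Fin (1 + m0) := fun j => if h : j ≠ z then φf j h else z with hψ
  have hψ1 : ∀ j, j ≠ z → ψ j ≠ z := by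
    intro j h
    rw [hψ]
    simp only [dif_pos h]
    exact hφf1 j h
  have hψ2 : ∀ j, j ≠ z → lam (ψ j) = T j j := by
    intro j h
    rw [hψ]
    simp only [dif_pos h]
    exact hφf2 j h
  have hnr : ∀ mm : Fin (1 + m0) →₀ ℕ, (∃ j, j ≠ z ∧ mm j ≠ 0) →
      (∑ j, (mm j : ℂ) * T j j) ≠ 0 := by
    rintro mm ⟨j0, hj0z, hj0⟩
    set s : Finset (Fin (1 + m0)) := Finset.univ.filter (fun j => j ≠ z) with hs
    set ms : Fin (1 + m0) → ℕ := fun k => ∑ j ∈ s.filter (fun j => ψ j = k), mm j with hms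
    have hsplit : ∑ j, (mm j : ℂ) * T j j = ∑ j ∈ s, (mm j : ℂ) * T j j := by
      rw [← Finset.sum_filter_add_sum_filter_not Finset.univ (fun j => j ≠ z)
        (fun j => (mm j : ℂ) * T j j)]
      have h0 : ∑ j ∈ Finset.univ.filter (fun j => ¬ j ≠ z), (mm j : ℂ) * T j j = 0 := by
        apply Finset.sum_eq_zero
        intro j hj
        have : j = z := not_not.mp (Finset.mem_filter.mp hj).2
        rw [this, hdz, mul_zero]
      rw [h0, add_zero, hs]
    have hfib := Finset.sum_fiberwise_of_maps_to (s := s) (t := (Finset.univ : Finset (Fin (1 + m0))))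
      (g := ψ) (fun j _ => Finset.mem_univ (ψ j)) (fun j => (mm j : ℂ) * lam (ψ j))
    have hinner : ∀ k, ∑ j ∈ s.filter (fun j => ψ j = k), (mm j : ℂ) * lam (ψ j)
        = (ms k : ℂ) * lam k := by
      intro k
      rw [hms]
      push_cast
      rw [Finset.sum_mul]
      refine Finset.sum_congr rfl fun j hj => ?_
      rw [(Finset.mem_filter.mp hj).2]
    have hstep : ∑ j ∈ s, (mm j : ℂ) * T j j = ∑ j ∈ s, (mm j : ℂ) * lam (ψ j) :=
      Finset.sum_congr rfl (fun j hj => by rw [hψ2 j (Finset.mem_filter.mp hj).2])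
    have htotal : ∑ j, (mm j : ℂ) * T j j = ∑ k, (ms k : ℂ) * lam k := by
      rw [hsplit, hstep, ← hfib]
      exact Finset.sum_congr rfl fun k _ => hinner k
    rw [htotal]
    apply hres ms
    · rw [hms]
      have hemp : s.filter (fun j => ψ j = z) = ∅ :=
        Finset.filter_false_of_mem (fun j hj => hψ1 j (Finset.mem_filter.mp hj).2)
      simp only []
      rw [hemp, Finset.sum_empty]
    · have hfibN := Finset.sum_fiberwise_of_maps_to (s := s) (t := (Finset.univ : Finset (Fin (1 + m0))))
        (g := ψ) (fun j _ => Finset.mem_univ (ψ j)) mm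
      have h1 : 1 ≤ mm j0 := Nat.one_le_iff_ne_zero.mpr hj0
      have h2 : mm j0 ≤ ∑ j ∈ s, mm j :=
        Finset.single_le_sum (fun i _ => Nat.zero_le _)
          (Finset.mem_filter.mpr ⟨Finset.mem_univ _, hj0z⟩)
      calc 1 ≤ ∑ j ∈ s, mm j := le_trans h1 h2
        _ = ∑ k, ms k := hfibN.symm
  -- transport the PDE to the triangular side
  have hPT : P * T = Cc * P := by
    rw [hT, ← Matrix.mul_assoc, ← Matrix.mul_assoc, hPPinv, Matrix.one_mul]
  set G : MvPolynomial (Fin (1 + m0)) ℂ := subM P Hc with hG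
  have hGker : ∑ j, (∑ i, T j i • X i) * pderiv j G = 0 := by
    rw [hG, DD_subM P T Cc hPT Hc, hkerC, map_zero]
  have hzonly := key_kernel z T hTrow hraise hnr G hGker
  have hHcG : Hc = subM Pinv G := by
    rw [hG, subM_comp, hPPinv, subM_one]
  have hProwz : ∀ j, Pinv z j = if z = j then 1 else 0 := by
    intro j
    rw [hPinv, Matrix.submatrix_apply, hsz]
    rcases hb : ε.symm j with b | b <;>
      have hj2 : j = ε (ε.symm j) := (ε.apply_symm_apply j).symm <;>
      rw [hb] at hj2
    · rw [if_pos]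
      · simp [Subsingleton.elim (0 : Fin 1) b]
      · rw [hj2, Subsingleton.elim b 0, hεl]
    · rw [if_neg]
      · simp
      · intro h
        exact hεrz b (by rw [← hj2, ← h])
  have hsubX : subM Pinv (X z) = X z := by
    rw [subM_X, Finset.sum_congr rfl (fun k _ => by rw [hProwz k] :
      ∀ k ∈ Finset.univ, Pinv z k • (X k : MvPolynomial (Fin (1 + m0)) ℂ)
        = (if z = k then (1:ℂ) else 0) • X k)]
    simp [ite_smul]
  -- Hc only involves X z
  have hHc2 : Hc = ∑ v ∈ G.support, (coeff v G) • (X z : MvPolynomial (Fin (1 + m0)) ℂ) ^ (v z) := by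
    have hmono : ∀ v ∈ G.support,
        (MvPolynomial.monomial v) (coeff v G) = coeff v G • (X z : MvPolynomial (Fin (1 + m0)) ℂ) ^ (v z) := by
      intro v hv
      have hvz : v = Finsupp.single z (v z) := by
        ext l
        rcases eq_or_ne l z with rfl | hl
        · simp
        · rw [hzonly v hv l hl, Finsupp.single_apply, if_neg (fun h => hl h.symm)]
      rw [X_pow_eq_monomial, smul_monomial, smul_eq_mul, mul_one, ← hvz]
    calc Hc = subM Pinv G := hHcG
      _ = subM Pinv (∑ v ∈ G.support, (MvPolynomial.monomial v) (coeff v G)) := by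
          rw [← as_sum G]
      _ = ∑ v ∈ G.support, subM Pinv ((MvPolynomial.monomial v) (coeff v G)) := map_sum _ _ _
      _ = ∑ v ∈ G.support, (coeff v G) • (X z : MvPolynomial (Fin (1 + m0)) ℂ) ^ (v z) := by
          refine Finset.sum_congr rfl fun v hv => ?_
          rw [hmono v hv, map_smul, map_pow, hsubX]
  have hHcform : ∀ mm ∈ Hc.support, ∀ j, j ≠ z → mm j = 0 := by
    intro mm hmm j hj
    by_contra hne0
    apply MvPolynomial.mem_support_iff.mp hmm
    rw [hHc2, MvPolynomial.coeff_sum]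
    apply Finset.sum_eq_zero
    intro v hv
    rw [MvPolynomial.coeff_smul, X_pow_eq_monomial, coeff_monomial, if_neg, smul_zero]
    intro hEq
    apply hne0
    rw [← hEq, Finsupp.single_apply, if_neg (fun h => hj h.symm)]
  -- conclude
  refine ⟨MvPolynomial.coeff (Finsupp.single z ℓ) H, ?_⟩
  apply MvPolynomial.ext
  intro dd
  rw [MvPolynomial.coeff_smul, X_pow_eq_monomial, coeff_monomial]
  rcases eq_or_ne (Finsupp.single z ℓ) dd with heq | hne
  · rw [if_pos heq, heq, smul_eq_mul, mul_one]
  · rw [if_neg hne, smul_zero]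
    by_contra hne0
    have hddC : dd ∈ Hc.support := by
      rw [MvPolynomial.mem_support_iff, hHc, MvPolynomial.coeff_map]
      intro h0
      exact hne0 ((map_eq_zero_iff φR (RingHom.injective φR)).mp h0)
    have hz0 : ∀ j, j ≠ z → dd j = 0 := fun j hj => hHcform dd hddC j hj
    have hdeg : dd.degree = ℓ := by
      by_contra hdeg
      exact hne0 (hH.coeff_eq_zero hdeg)
    apply hne
    have hsupp : dd.support ⊆ {z} := by
      intro j hjs
      rw [Finset.mem_singleton]
      by_contra hjz
      exact (Finsupp.mem_support_iff.mp hjs) (hz0 j hjz)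
    have hdegz : dd.degree = dd z := by
      show ∑ i ∈ dd.support, dd i = dd z
      rw [Finset.sum_subset hsupp (fun x _ hx => Finsupp.notMem_support_iff.mp hx)]
      rw [Finset.sum_singleton]
    ext l
    rcases eq_or_ne l z with rfl | hl
    · rw [Finsupp.single_apply, if_pos rfl, ← hdeg, hdegz]
    · rw [Finsupp.single_apply, if_neg (fun h => hl h.symm), hz0 l hl]
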